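/- Let B be a linear operator on R^d with a unique simple leading eigenvalue λ = 1 (all other eigenvalues have modulus < 1), with right eigenvector v and left eigenvector v* normalized so that (v*, v) = 1. If an operator C satisfies |(v*, C v)| > 1, then for all sufficiently large r the operator B^r C has a real eigenvalue of modulus greater than 1; in particular ρ(B^r C) > 1. -/

import Mathlib

open Matrix Polynomial Filter
open scoped ENNReal NNReal

section AuxGeneral
variable {n : Type*} [Fintype n] [DecidableEq n]

private lemma myEvalCharpoly {R : Type*} [CommRing R] (A : Matrix n n R) (t : R) :
    A.charpoly.eval t = (t • (1 : Matrix n n R) - A).det := by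
  rw [Matrix.charpoly, show (Polynomial.eval t) = (Polynomial.evalRingHom t : R[X] → R) from rfl,
    RingHom.map_det]
  congr 1
  ext i j
  by_cases h : i = j
  · subst h
    simp [Matrix.one_apply]
  · simp [Matrix.charmatrix_apply_ne _ _ _ h, Matrix.one_apply, h]

private lemma myCharpolySub {R : Type*} [CommRing R] (A : Matrix n n R) (t : R) :
    (A - t • (1 : Matrix n n R)).charpoly = A.charpoly.comp (X + C t) := by
  have h1 : A.charpoly.comp (X + C t)
      = (eval₂RingHom (Polynomial.C : R →+* R[X]) (X + C t) : R[X] →+* R[X]) A.charpoly := rfl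
  rw [h1, Matrix.charpoly, Matrix.charpoly, RingHom.map_det]
  congr 1
  ext i j
  by_cases h : i = j
  · subst h
    simp [Matrix.one_apply, charmatrix_apply_eq]
    ring
  · simp [Matrix.charmatrix_apply_ne _ _ _ h, Matrix.one_apply, h]

private lemma myMemSpectrum {K : Type*} [Field K] (A : Matrix n n K) (z : K) :
    z ∈ spectrum K A ↔ (z • (1 : Matrix n n K) - A).det = 0 := by
  rw [spectrum.mem_iff, Algebra.algebraMap_eq_smul_one]
  simp [Matrix.isUnit_iff_isUnit_det, isUnit_iff_ne_zero]

private lemma myEigOfDet {K : Type*} [Field K] [DecidableEq K] {A : Matrix n n K} {z : K}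
    (h : (z • (1 : Matrix n n K) - A).det = 0) :
    ∃ x : n → K, x ≠ 0 ∧ A *ᵥ x = z • x := by
  obtain ⟨x, hx0, hx⟩ := (Matrix.exists_mulVec_eq_zero_iff).mpr h
  refine ⟨x, hx0, ?_⟩
  rwa [Matrix.sub_mulVec, sub_eq_zero, Matrix.smul_mulVec, Matrix.one_mulVec,
    eq_comm] at hx

private lemma myDetOfEig {K : Type*} [Field K] [DecidableEq K] {A : Matrix n n K} {z : K}
    {x : n → K} (hx0 : x ≠ 0) (hx : A *ᵥ x = z • x) :
    (z • (1 : Matrix n n K) - A).det = 0 := by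
  rw [← Matrix.exists_mulVec_eq_zero_iff]
  refine ⟨x, hx0, ?_⟩
  rw [Matrix.sub_mulVec, Matrix.smul_mulVec, Matrix.one_mulVec, hx, sub_self]

end AuxGeneral

private lemma myNoTwoIndep {d : ℕ} (A : Matrix (Fin d) (Fin d) ℂ)
    (hsimple : A.charpoly.rootMultiplicity 1 = 1)
    {x y : Fin d → ℂ} (hx : A.mulVec x = x) (hy : A.mulVec y = y)
    (hind : LinearIndependent ℂ ![x, y]) : False := by
  classical
  set φ : Module.End ℂ (Fin d → ℂ) := Matrix.toLin' (A - (1:ℂ) • 1) with hφ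
  have hchar : φ.charpoly = (A - (1:ℂ) • (1 : Matrix (Fin d) (Fin d) ℂ)).charpoly := by
    rw [← LinearMap.charpoly_toMatrix φ (Pi.basisFun ℂ (Fin d))]
    rw [LinearMap.toMatrix_eq_toMatrix', hφ, LinearMap.toMatrix'_toLin']
  have hmult : ((A - (1:ℂ) • (1 : Matrix (Fin d) (Fin d) ℂ)).charpoly).natTrailingDegree = 1 := by
    rw [myCharpolySub, ← Polynomial.rootMultiplicity_eq_natTrailingDegree, hsimple]
  have hdim : Module.finrank ℂ (φ.maxGenEigenspace 0) = 1 := by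
    rw [LinearMap.finrank_maxGenEigenspace_zero_eq, hchar, hmult]
  have hmem : ∀ w : Fin d → ℂ, A.mulVec w = w → w ∈ φ.maxGenEigenspace 0 := by
    intro w hw
    rw [Module.End.mem_maxGenEigenspace]
    refine ⟨1, ?_⟩
    simp only [zero_smul, sub_zero, pow_one, hφ]
    show Matrix.toLin' (A - (1:ℂ) • 1) w = 0
    rw [Matrix.toLin'_apply, Matrix.sub_mulVec, hw]
    simp [Matrix.smul_mulVec, Matrix.one_mulVec]
  set S := φ.maxGenEigenspace 0
  have hu : LinearIndependent ℂ (fun i : Fin 2 => (![⟨x, hmem x hx⟩, ⟨y, hmem y hy⟩] i : S)) := by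
    apply LinearIndependent.of_comp S.subtype
    convert hind using 1
    funext i
    fin_cases i <;> rfl
    all_goals rfl
  have := hu.fintype_card_le_finrank
  rw [hdim] at this
  simp at this

section NormAux

attribute [local instance] Matrix.linftyOpNormedRing Matrix.linftyOpNormedAlgebra

private lemma myPowTendsto {d : ℕ} (hd : 0 < d) (M : Matrix (Fin d) (Fin d) ℝ)
    (hspec : ∀ z ∈ spectrum ℂ (M.map (Complex.ofReal ·)), ‖z‖ < 1) (i j : Fin d) :
    Filter.Tendsto (fun r : ℕ => (M ^ r) i j) Filter.atTop (nhds 0) := by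
  classical
  haveI : Nonempty (Fin d) := ⟨⟨0, hd⟩⟩
  set Mc : Matrix (Fin d) (Fin d) ℂ := M.map (Complex.ofReal ·) with hMc
  haveI : CompleteSpace (Matrix (Fin d) (Fin d) ℂ) := FiniteDimensional.complete ℂ _
  have hρ : spectralRadius ℂ Mc < 1 := by
    have h1 : ∀ z ∈ spectrum ℂ Mc, ‖z‖₊ < (1 : ℝ≥0) := by
      intro z hz
      have := hspec z hz
      rwa [← coe_nnnorm, ← NNReal.coe_one, NNReal.coe_lt_coe] at this
    have := spectrum.spectralRadius_lt_of_forall_lt (a := Mc) h1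
    simpa using this
  obtain ⟨c, hc1, hc2⟩ := ENNReal.lt_iff_exists_nnreal_btwn.mp hρ
  have hgel := spectrum.pow_nnnorm_pow_one_div_tendsto_nhds_spectralRadius Mc
  have hev : ∀ᶠ n : ℕ in atTop, (‖Mc ^ n‖₊ : ℝ≥0∞) ^ (1 / (n:ℝ)) < (c : ℝ≥0∞) :=
    hgel.eventually_lt_const hc1
  have hbound : ∀ᶠ n : ℕ in atTop, ‖(M ^ n) i j‖ ≤ (c:ℝ) ^ n := by
    filter_upwards [hev, Filter.eventually_ge_atTop 1] with n hn hn1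
    have hx : (‖Mc ^ n‖₊ : ℝ≥0∞) ≤ (c : ℝ≥0∞) ^ n := by
      have hn0 : (n:ℝ) ≠ 0 := by
        exact_mod_cast Nat.one_le_iff_ne_zero.mp hn1
      have h1 : ((‖Mc ^ n‖₊ : ℝ≥0∞) ^ (1 / (n:ℝ))) ^ (n:ℝ) ≤ (c : ℝ≥0∞) ^ (n:ℝ) :=
        ENNReal.rpow_le_rpow hn.le (by positivity)
      rwa [← ENNReal.rpow_mul, one_div, inv_mul_cancel₀ hn0, ENNReal.rpow_one,
        ENNReal.rpow_natCast] at h1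
    have hx' : ‖Mc ^ n‖ ≤ (c:ℝ) ^ n := by
      have := ENNReal.toReal_mono (by simp) hx
      simpa [← ENNReal.coe_pow] using this
    have hentry : ‖(Mc ^ n) i j‖₊ ≤ ‖Mc ^ n‖₊ := by
      rw [Matrix.linfty_opNNNorm_def]
      calc ‖(Mc ^ n) i j‖₊
          ≤ ∑ k, ‖(Mc ^ n) i k‖₊ :=
            Finset.single_le_sum (f := fun k => ‖(Mc ^ n) i k‖₊)
              (fun _ _ => zero_le) (Finset.mem_univ j)
        _ ≤ _ := Finset.le_sup (f := fun i => ∑ k, ‖(Mc ^ n) i k‖₊) (Finset.mem_univ i)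
    have hmap : (Mc ^ n) i j = ((M ^ n) i j : ℂ) := by
      have : Mc ^ n = (M ^ n).map (Complex.ofReal ·) := by
        rw [hMc]
        show (Complex.ofRealHom.mapMatrix M) ^ n = Complex.ofRealHom.mapMatrix (M ^ n)
        rw [map_pow]
      rw [this]; rfl
    calc ‖(M ^ n) i j‖ = ‖(Mc ^ n) i j‖ := by rw [hmap]; simp
      _ ≤ ‖Mc ^ n‖ := by exact_mod_cast hentry
      _ ≤ (c:ℝ) ^ n := hx'
  have hc2' : (c : ℝ) < 1 := by exact_mod_cast hc2
  exact squeeze_zero_norm' hbound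
    (tendsto_pow_atTop_nhds_zero_of_lt_one c.coe_nonneg hc2')

private lemma myDetPos {d : ℕ} (hd : 0 < d) (A : Matrix (Fin d) (Fin d) ℝ) :
    ∃ K : ℝ, 0 ≤ K ∧ ∀ t : ℝ, K < t → 0 < (t • (1 : Matrix (Fin d) (Fin d) ℝ) - A).det := by
  classical
  refine ⟨‖A‖, norm_nonneg A, ?_⟩
  intro t ht
  have hroot : ∀ u : ℝ, t ≤ u → (u • (1 : Matrix (Fin d) (Fin d) ℝ) - A).det ≠ 0 := by
    intro u hu hdet
    obtain ⟨x, hx0, hx⟩ := (Matrix.exists_mulVec_eq_zero_iff).mpr hdet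
    have hAx : A.mulVec x = u • x := by
      rw [Matrix.sub_mulVec, sub_eq_zero, Matrix.smul_mulVec, Matrix.one_mulVec] at hx
      exact hx.symm
    have h1 : ‖A.mulVec x‖ ≤ ‖A‖ * ‖x‖ := Matrix.linfty_opNorm_mulVec A x
    rw [hAx, norm_smul] at h1
    have hxpos : 0 < ‖x‖ := norm_pos_iff.mpr hx0
    have : u ≤ ‖A‖ := by
      have h2 : u * ‖x‖ ≤ |u| * ‖x‖ :=
        mul_le_mul_of_nonneg_right (le_abs_self u) (norm_nonneg x)
      simp only [Real.norm_eq_abs] at h1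
      nlinarith
    linarith
  by_contra hle
  push_neg at hle
  set p := A.charpoly with hp
  have hdeg : 0 < p.degree := by
    rw [hp, Matrix.charpoly_degree_eq_dim]
    simpa using hd
  have htend := p.tendsto_atTop_of_leadingCoeff_nonneg hdeg
    (by rw [hp, (Matrix.charpoly_monic A).leadingCoeff]; norm_num)
  obtain ⟨T, hT1, hT2⟩ :=
    ((htend.eventually_ge_atTop 1).and (Filter.eventually_ge_atTop t)).exists
  have h0mem : (0:ℝ) ∈ Set.Icc (p.eval t) (p.eval T) := by
    constructor
    · rw [hp, myEvalCharpoly]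
      exact hle
    · linarith
  obtain ⟨u, hu, hupe⟩ := intermediate_value_Icc hT2 (p.continuousOn) h0mem
  simp only [hp, myEvalCharpoly] at hupe
  exact hroot u hu.1 hupe

end NormAux

section KeyAlg
variable {d : ℕ} (B : Matrix (Fin d) (Fin d) ℝ) (v vstar : Fin d → ℝ)

private lemma myProjIdents (hv : B.mulVec v = v) (hvstar' : vecMul vstar B = vstar)
    (hnormal : vstar ⬝ᵥ v = 1) :
    B * vecMulVec v vstar = vecMulVec v vstar ∧
    vecMulVec v vstar * B = vecMulVec v vstar ∧
    vecMulVec v vstar * vecMulVec v vstar = vecMulVec v vstar := by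
  refine ⟨?_, ?_, ?_⟩
  · ext i j
    rw [Matrix.mul_apply]
    simp only [vecMulVec_apply]
    calc ∑ k, B i k * (v k * vstar j) = (∑ k, B i k * v k) * vstar j := by
          rw [Finset.sum_mul]
          exact Finset.sum_congr rfl fun k _ => (mul_assoc _ _ _).symm
      _ = v i * vstar j := by
          rw [show ∑ k, B i k * v k = (B *ᵥ v) i from rfl, hv]
  · ext i j
    rw [Matrix.mul_apply]
    simp only [vecMulVec_apply]
    calc ∑ k, v i * vstar k * B k j = v i * ∑ k, vstar k * B k j := by
          rw [Finset.mul_sum]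
          exact Finset.sum_congr rfl fun k _ => (mul_assoc _ _ _)
      _ = v i * vstar j := by
          rw [show ∑ k, vstar k * B k j = (vstar ᵥ* B) j from rfl, hvstar']
  · ext i j
    rw [Matrix.mul_apply]
    simp only [vecMulVec_apply]
    calc ∑ k, v i * vstar k * (v k * vstar j)
        = (v i * ∑ k, vstar k * v k) * vstar j := by
          rw [Finset.mul_sum, Finset.sum_mul]
          exact Finset.sum_congr rfl fun k _ => by ring
      _ = v i * vstar j := by
          rw [show ∑ k, vstar k * v k = vstar ⬝ᵥ v from rfl, hnormal]
          ring

private lemma myPowDecomp (hv : B.mulVec v = v) (hvstar' : vecMul vstar B = vstar)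
    (hnormal : vstar ⬝ᵥ v = 1) (r : ℕ) :
    B ^ (r + 1) = (B - vecMulVec v vstar) ^ (r + 1) + vecMulVec v vstar := by
  obtain ⟨hBP, hPB, hPP⟩ := myProjIdents B v vstar hv hvstar' hnormal
  set P := vecMulVec v vstar
  set M := B - P with hM
  have hMP : M * P = 0 := by rw [hM, sub_mul, hBP, hPP, sub_self]
  have hPM : P * M = 0 := by rw [hM, mul_sub, hPB, hPP, sub_self]
  induction r with
  | zero => rw [pow_one, pow_one, hM, sub_add_cancel]
  | succ r ih =>
      calc B ^ (r + 2) = (M ^ (r + 1) + P) * B := by rw [pow_succ, ih]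
        _ = M ^ (r + 1) * (M + P) + P * (M + P) := by
            rw [add_mul, hM]
            congr 2 <;> rw [sub_add_cancel]
        _ = M ^ (r + 2) + P := by
            rw [mul_add, mul_add, ← pow_succ, hPM, hPP, zero_add,
              show M ^ (r + 1) * P = M ^ r * (M * P) by rw [← mul_assoc, ← pow_succ],
              hMP, mul_zero, add_zero]

private lemma mySpecM (hv : B.mulVec v = v) (hvstar' : vecMul vstar B = vstar)
    (hnormal : vstar ⬝ᵥ v = 1)
    (hlead : ∀ z ∈ spectrum ℂ (B.map (Complex.ofReal ·)), z ≠ 1 → ‖z‖ < 1)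
    (hsimple : (Matrix.charpoly (B.map (Complex.ofReal ·))).rootMultiplicity 1 = 1) :
    ∀ z ∈ spectrum ℂ ((B - vecMulVec v vstar).map (Complex.ofReal ·)), ‖z‖ < 1 := by
  classical
  intro z hz
  set P := vecMulVec v vstar with hP
  set Mc := (B - P).map (Complex.ofReal ·) with hMc
  set Bc := B.map (Complex.ofReal ·) with hBc
  set vc : Fin d → ℂ := fun i => (v i : ℂ) with hvc
  set wc : Fin d → ℂ := fun i => (vstar i : ℂ) with hwc
  rw [myMemSpectrum] at hz
  obtain ⟨x, hx0, hx⟩ := myEigOfDet hz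
  have hwMr : vecMul vstar (B - P) = 0 := by
    rw [Matrix.vecMul_sub, hvstar']
    have : vstar ᵥ* P = vstar := by
      funext j
      show ∑ i, vstar i * (v i * vstar j) = vstar j
      calc ∑ i, vstar i * (v i * vstar j) = (∑ i, vstar i * v i) * vstar j := by
            rw [Finset.sum_mul]
            exact Finset.sum_congr rfl fun k _ => (mul_assoc _ _ _).symm
        _ = vstar j := by
            rw [show ∑ i, vstar i * v i = vstar ⬝ᵥ v from rfl, hnormal, one_mul]
    rw [this, sub_self]
  have hwM : vecMul wc Mc = 0 := by
    funext j
    have := (RingHom.map_vecMul (Complex.ofRealHom) (B - P) vstar j).symm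
    rw [hwMr] at this
    simp [hMc, hwc, Function.comp_def] at this; exact this
  have hzw : z * (wc ⬝ᵥ x) = 0 := by
    have h1 : wc ⬝ᵥ (Mc *ᵥ x) = 0 := by
      rw [Matrix.dotProduct_mulVec, hwM, zero_dotProduct]
    rwa [hx, dotProduct_smul, smul_eq_mul] at h1
  by_cases hz0 : z = 0
  · rw [hz0]; norm_num
  have hwx : wc ⬝ᵥ x = 0 := by
    rcases mul_eq_zero.mp hzw with h | h
    · exact absurd h hz0
    · exact h
  have hPx : (P.map (Complex.ofReal ·)) *ᵥ x = 0 := by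
    funext i
    show ∑ j, ((P.map (Complex.ofReal ·)) i j) * x j = 0
    have hentry : ∀ j, ((P.map (Complex.ofReal ·)) i j) = vc i * wc j := by
      intro j
      simp [hP, hvc, hwc, vecMulVec_apply]
    calc ∑ j, ((P.map (Complex.ofReal ·)) i j) * x j
        = vc i * ∑ j, wc j * x j := by
          rw [Finset.mul_sum]
          exact Finset.sum_congr rfl fun j _ => by rw [hentry j]; ring
      _ = 0 := by rw [show ∑ j, wc j * x j = wc ⬝ᵥ x from rfl, hwx, mul_zero]
  have hBx : Bc *ᵥ x = z • x := by
    have hsplit : Bc = Mc + P.map (Complex.ofReal ·) := by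
      ext i j
      simp [hBc, hMc, Matrix.sub_apply]
    rw [hsplit, Matrix.add_mulVec, hx, hPx, add_zero]
  have hzB : z ∈ spectrum ℂ Bc := (myMemSpectrum _ _).mpr (myDetOfEig hx0 hBx)
  by_cases hz1 : z = 1
  · exfalso
    subst hz1
    rw [one_smul] at hBx
    have hvcEig : Bc *ᵥ vc = vc := by
      funext i
      have := (RingHom.map_mulVec (Complex.ofRealHom) B v i).symm
      rw [hv] at this
      simp [hBc, hvc, Function.comp_def] at this; exact this
    have hwv : wc ⬝ᵥ vc = 1 := by
      have := RingHom.map_dotProduct (Complex.ofRealHom) vstar v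
      rw [hnormal] at this
      simpa [hwc, hvc, Function.comp_def] using this.symm
    have hind : LinearIndependent ℂ ![vc, x] := by
      rw [LinearIndependent.pair_iff]
      intro s t hst
      have hdot := congrArg (fun w => wc ⬝ᵥ w) hst
      simp only [dotProduct_add, dotProduct_smul, hwv, hwx,
        dotProduct_zero, smul_eq_mul, mul_one, mul_zero, add_zero] at hdot
      have hs : s = 0 := hdot
      subst hs
      rw [zero_smul, zero_add] at hst
      rcases smul_eq_zero.mp hst with h | h
      · exact ⟨rfl, h⟩
      · exact absurd h hx0
    exact myNoTwoIndep Bc hsimple hvcEig hBx hind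
  · exact hlead z hzB hz1

end KeyAlg

private lemma myRankOneDet {d : ℕ} (hd : 0 < d) (a b : Fin d → ℝ) {s : ℝ} (hs : s ≠ 0) :
    (s • (1 : Matrix (Fin d) (Fin d) ℝ) - vecMulVec a b).det
      = s ^ (d - 1) * (s - b ⬝ᵥ a) := by
  have h1 : s • (1 : Matrix (Fin d) (Fin d) ℝ) - vecMulVec a b
      = s • ((1 : Matrix (Fin d) (Fin d) ℝ) + vecMulVec (-(s⁻¹ • a)) b) := by
    ext i j
    simp only [Matrix.sub_apply, Matrix.add_apply, Matrix.smul_apply, vecMulVec_apply,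
      Pi.neg_apply, Pi.smul_apply, smul_eq_mul]
    field_simp
    ring
  rw [h1, Matrix.det_smul, Matrix.vecMulVec_eq Unit, Matrix.det_one_add_replicateCol_mul_replicateRow]
  have h2 : b ⬝ᵥ (-(s⁻¹ • a)) = -(s⁻¹ * (b ⬝ᵥ a)) := by
    rw [dotProduct_neg, dotProduct_smul, smul_eq_mul]
  rw [h2]
  obtain ⟨e, rfl⟩ : ∃ e, d = e + 1 := ⟨d - 1, (Nat.succ_pred_eq_of_pos hd).symm⟩
  simp only [Fintype.card_fin, Nat.add_sub_cancel, pow_succ]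
  field_simp
  ring

private lemma myKey {d : ℕ} (B C : Matrix (Fin d) (Fin d) ℝ) (v vstar : Fin d → ℝ)
    (hd : 0 < d)
    (hv : B.mulVec v = v) (hvstar' : vecMul vstar B = vstar)
    (hnormal : vstar ⬝ᵥ v = 1)
    (hlead : ∀ z ∈ spectrum ℂ (B.map (Complex.ofReal ·)), z ≠ 1 → ‖z‖ < 1)
    (hsimple : (Matrix.charpoly (B.map (Complex.ofReal ·))).rootMultiplicity 1 = 1)
    (hC : 1 < vstar ⬝ᵥ C.mulVec v) :
    ∃ R : ℕ, ∀ r ≥ R, ∃ μ : ℝ, 1 < μ ∧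
      (μ • (1 : Matrix (Fin d) (Fin d) ℝ) - B ^ r * C).det = 0 := by
  classical
  set P := vecMulVec v vstar with hP
  set c := vstar ⬝ᵥ C.mulVec v with hc
  set s := (1 + c) / 2 with hs
  have hs1 : 1 < s := by rw [hs]; linarith
  have hsc : s < c := by rw [hs]; linarith
  have hs0 : s ≠ 0 := by intro h; rw [h] at hs1; linarith
  have hMtend := myPowTendsto hd (B - P)
    (mySpecM B v vstar hv hvstar' hnormal hlead hsimple)
  have hBtend : ∀ i j, Tendsto (fun r : ℕ => (B ^ r) i j) atTop (nhds (P i j)) := by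
    intro i j
    have h1 : Tendsto (fun r : ℕ => ((B - P) ^ r) i j + P i j) atTop (nhds (0 + P i j)) :=
      (hMtend i j).add tendsto_const_nhds
    rw [zero_add] at h1
    apply h1.congr'
    filter_upwards [eventually_ge_atTop 1] with r hr
    obtain ⟨e, rfl⟩ : ∃ e, r = e + 1 := ⟨r - 1, (Nat.succ_pred_eq_of_pos hr).symm⟩
    rw [myPowDecomp B v vstar hv hvstar' hnormal e]
    simp [Matrix.add_apply, hP]
  have hBCtend : ∀ i j, Tendsto (fun r : ℕ => (B ^ r * C) i j) atTop (nhds ((P * C) i j)) := by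
    intro i j
    simp only [Matrix.mul_apply]
    exact tendsto_finset_sum _ fun k _ => (hBtend i k).mul tendsto_const_nhds
  have hMat : Tendsto (fun r : ℕ => B ^ r * C) atTop (nhds (P * C)) := by
    apply tendsto_pi_nhds.mpr
    intro i
    apply tendsto_pi_nhds.mpr
    intro j
    exact hBCtend i j
  have hcont : Continuous fun A : Matrix (Fin d) (Fin d) ℝ =>
      (s • (1 : Matrix (Fin d) (Fin d) ℝ) - A).det :=
    Continuous.matrix_det (continuous_const.sub continuous_id)
  have hdetlim : Tendsto (fun r : ℕ => (s • (1 : Matrix (Fin d) (Fin d) ℝ) - B ^ r * C).det)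
      atTop (nhds ((s • (1 : Matrix (Fin d) (Fin d) ℝ) - P * C).det)) :=
    (hcont.tendsto (P * C)).comp hMat
  have hPC : P * C = vecMulVec v (vecMul vstar C) := by
    ext i j
    rw [Matrix.mul_apply]
    simp only [hP, vecMulVec_apply]
    calc ∑ k, v i * vstar k * C k j = v i * ∑ k, vstar k * C k j := by
          rw [Finset.mul_sum]
          exact Finset.sum_congr rfl fun k _ => mul_assoc _ _ _
      _ = v i * (vstar ᵥ* C) j := rfl
  have hval : (s • (1 : Matrix (Fin d) (Fin d) ℝ) - P * C).det = s ^ (d - 1) * (s - c) := by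
    rw [hPC, myRankOneDet hd _ _ hs0, ← Matrix.dotProduct_mulVec, ← hc]
  have hneg : (s • (1 : Matrix (Fin d) (Fin d) ℝ) - P * C).det < 0 := by
    rw [hval]
    exact mul_neg_of_pos_of_neg (pow_pos (by linarith) _) (by linarith)
  obtain ⟨R0, hR0⟩ := eventually_atTop.mp (hdetlim.eventually_lt_const hneg)
  refine ⟨max R0 1, fun r hr => ?_⟩
  have hfneg : (s • (1 : Matrix (Fin d) (Fin d) ℝ) - B ^ r * C).det < 0 :=
    hR0 r (le_trans (le_max_left _ _) hr)
  obtain ⟨K, hK0, hKpos⟩ := myDetPos hd (B ^ r * C)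
  set T := max (s + 1) (K + 1) with hT
  have hKT : K < T := lt_of_lt_of_le (by linarith) (le_max_right _ _)
  have hsT : s ≤ T := le_trans (by linarith) (le_max_left _ _)
  have hfTpos : 0 < (T • (1 : Matrix (Fin d) (Fin d) ℝ) - B ^ r * C).det := hKpos T hKT
  have h0mem : (0:ℝ) ∈ Set.Icc (((B ^ r * C).charpoly).eval s) (((B ^ r * C).charpoly).eval T) := by
    rw [myEvalCharpoly, myEvalCharpoly]
    exact ⟨hfneg.le, hfTpos.le⟩
  obtain ⟨u, hu, hue⟩ := intermediate_value_Icc hsT ((B ^ r * C).charpoly).continuousOn h0mem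
  refine ⟨u, lt_of_lt_of_le hs1 hu.1, ?_⟩
  rw [← myEvalCharpoly]
  exact hue

private lemma myToSpectrum {d : ℕ} (A : Matrix (Fin d) (Fin d) ℝ) (μ : ℝ)
    (h : (μ • (1 : Matrix (Fin d) (Fin d) ℝ) - A).det = 0) :
    (μ : ℂ) ∈ spectrum ℂ (A.map (Complex.ofReal ·)) := by
  rw [myMemSpectrum]
  have hmap : (μ : ℂ) • (1 : Matrix (Fin d) (Fin d) ℂ) - A.map (Complex.ofReal ·)
      = (μ • (1 : Matrix (Fin d) (Fin d) ℝ) - A).map (Complex.ofReal ·) := by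
    ext i j
    by_cases hij : i = j <;>
      simp [hij, Matrix.one_apply, Matrix.sub_apply, Matrix.smul_apply]
  rw [hmap, show ((μ • (1 : Matrix (Fin d) (Fin d) ℝ) - A).map (Complex.ofReal ·))
      = Complex.ofRealHom.mapMatrix (μ • (1 : Matrix (Fin d) (Fin d) ℝ) - A) from rfl,
    ← RingHom.map_det, h]
  simp

open Matrix
/-- let `B` have a unique simple leading eigenvalue `1` (all other complex
eigenvalues of modulus `< 1`), with right eigenvector `v` and left eigenvector `v*`
normalized by `(v*, v) = 1`.  If `|(v*, C v)| > 1` then, for all sufficiently large `r`,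
the operator `B^r C` has a real eigenvalue of modulus greater than `1`;
in particular `ρ(B^r C) > 1`. -/
theorem eventually_spectral_radius_gt_one
    {d : ℕ} (B C : Matrix (Fin d) (Fin d) ℝ)
    (v vstar : Fin d → ℝ) (hv0 : v ≠ 0) (hvstar0 : vstar ≠ 0)
    (hv : B.mulVec v = v)
    (hvstar : B.transpose.mulVec vstar = vstar)
    (hnormal : vstar ⬝ᵥ v = 1)
    (hlead : ∀ z ∈ spectrum ℂ (B.map (Complex.ofReal ·)), z ≠ 1 → ‖z‖ < 1)
    (hsimple : (Matrix.charpoly (B.map (Complex.ofReal ·))).rootMultiplicity 1 = 1)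
    (hC : |vstar ⬝ᵥ C.mulVec v| > 1) :
    ∃ R : ℕ, ∀ r ≥ R, ∃ μ : ℝ,
      ((μ : ℂ) ∈ spectrum ℂ (((B ^ r * C).map (Complex.ofReal ·)))) ∧ 1 < |μ| := by
  classical
  have hd : 0 < d := by
    rcases Nat.eq_zero_or_pos d with h | h
    · exfalso
      apply hv0
      funext i
      exact absurd i.2 (by omega)
    · exact h
  have hvstar' : vecMul vstar B = vstar := by
    rw [← Matrix.mulVec_transpose]
    exact hvstar
  rcases (lt_abs.mp hC) with hpos | hneg
  · obtain ⟨R, hR⟩ := myKey B C v vstar hd hv hvstar' hnormal hlead hsimple hpos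
    refine ⟨R, fun r hr => ?_⟩
    obtain ⟨μ, hμ1, hμdet⟩ := hR r hr
    exact ⟨μ, myToSpectrum _ μ hμdet, by rw [abs_of_pos (by linarith)]; exact hμ1⟩
  · have hC' : 1 < vstar ⬝ᵥ (-C).mulVec v := by
      rw [Matrix.neg_mulVec, dotProduct_neg]
      linarith
    obtain ⟨R, hR⟩ := myKey B (-C) v vstar hd hv hvstar' hnormal hlead hsimple hC'
    refine ⟨R, fun r hr => ?_⟩
    obtain ⟨μ, hμ1, hμdet⟩ := hR r hr
    have hdet' : ((-μ) • (1 : Matrix (Fin d) (Fin d) ℝ) - B ^ r * C).det = 0 := by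
      have hneg1 : (-μ) • (1 : Matrix (Fin d) (Fin d) ℝ) - B ^ r * C
          = -(μ • (1 : Matrix (Fin d) (Fin d) ℝ) - B ^ r * (-C)) := by
        rw [mul_neg]
        ext i j
        simp [Matrix.sub_apply, Matrix.neg_apply, Matrix.smul_apply]
        ring
      rw [hneg1, Matrix.det_neg, hμdet, mul_zero]
    refine ⟨-μ, myToSpectrum _ (-μ) hdet', ?_⟩
    rw [abs_neg, abs_of_pos (by linarith)]
    exact hμ1
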